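/- Let f ∈ F_L, δ > 0, and let X_δ be the (unique, global, C²) solution of the smoothed ODE Ẍ_δ + (3/max(δ,t))Ẋ_δ + ∇f(X_δ) = 0 with X_δ(0) = x₀, Ẋ_δ(0) = 0. Define M_δ(t) = sup_{u ∈ (0,t]} ‖Ẋ_δ(u)‖/u. Then for every δ < √(6/L), M_δ(δ) ≤ ‖∇f(x₀)‖ / (1 − Lδ²/6). -/

import Mathlib

open Set Filter Topology

noncomputable section

abbrev E (n : ℕ) := EuclideanSpace ℝ (Fin n)

def MemFL (n : ℕ) (L : ℝ) (f : E n → ℝ) : Prop :=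
  ConvexOn ℝ Set.univ f ∧ ContDiff ℝ 1 f ∧
    ∀ x y, ‖gradient f x - gradient f y‖ ≤ L * ‖x - y‖

/-- The solution `X` (with velocity `V = Ẋ`) of the smoothed ODE
`Ẍ + (3/max(δ,t))Ẋ + ∇f(X) = 0`, `X(0) = x₀`, `Ẋ(0) = 0`, on `[0,∞)`. -/
def SmoothedSol (n : ℕ) (f : E n → ℝ) (δ : ℝ) (x0 : E n) (X V : ℝ → E n) : Prop :=
  X 0 = x0 ∧ V 0 = 0 ∧
  (∀ t ∈ Set.Ici (0:ℝ), HasDerivWithinAt X (V t) (Set.Ici 0) t) ∧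
  (∀ t ∈ Set.Ici (0:ℝ),
    HasDerivWithinAt V (-(3 / max δ t) • V t - gradient f (X t)) (Set.Ici 0) t)

set_option maxHeartbeats 1600000 in
/-- **Lemma (bound on `M_δ(δ)`).** For `f ∈ F_L` and `δ < √(6/L)`, the solution of the
smoothed ODE satisfies `M_δ(δ) = sup_{u ∈ (0,δ]} ‖Ẋ_δ(u)‖/u ≤ ‖∇f(x₀)‖/(1 - Lδ²/6)`. -/
theorem smoothed_ode_M_at_delta (n : ℕ) (L : ℝ) (hL : 0 < L)
    (f : E n → ℝ) (hf : MemFL n L f) (x0 : E n)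
    (δ : ℝ) (hδ0 : 0 < δ) (hδ : δ < Real.sqrt (6 / L))
    (X V : ℝ → E n) (hXV : SmoothedSol n f δ x0 X V) :
    sSup ((fun u => ‖V u‖ / u) '' Set.Ioc (0:ℝ) δ) ≤
      ‖gradient f x0‖ / (1 - L * δ ^ 2 / 6) := by
  obtain ⟨hX0, hV0, hX', hV'⟩ := hXV
  set G := ‖gradient f x0‖ with hGdef
  -- continuity facts
  have hgradc : Continuous (gradient f) :=
    (InnerProductSpace.toDual ℝ (E n)).symm.continuous.comp (hf.2.1.continuous_fderiv one_ne_zero)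
  have hXc : ContinuousOn X (Icc 0 δ) := fun t ht =>
    ((hX' t ht.1).continuousWithinAt).mono (fun s hs => hs.1)
  have hVc : ContinuousOn V (Icc 0 δ) := fun t ht =>
    ((hV' t ht.1).continuousWithinAt).mono (fun s hs => hs.1)
  set g : ℝ → E n := fun t => gradient f (X t) with hgdef
  have hgc : ContinuousOn g (Icc 0 δ) := hgradc.comp_continuousOn hXc
  -- Key integral bound on the velocity via an integrating factor
  have hVle : ∀ t ∈ Icc (0:ℝ) δ, ‖V t‖ ≤ ∫ s in (0:ℝ)..t, ‖g s‖ := by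
    intro t ht
    obtain ⟨ht0, htδ⟩ := ht
    set W : ℝ → E n := fun s => Real.exp (3*s/δ) • V s with hWdef
    set W' : ℝ → E n := fun s => (-Real.exp (3*s/δ)) • g s with hW'def
    have hWc : ContinuousOn W (Icc 0 t) := by
      apply ContinuousOn.fun_smul
      · exact (Real.continuous_exp.comp (by continuity)).continuousOn
      · exact hVc.mono (Icc_subset_Icc le_rfl htδ)
    have hW'c : ContinuousOn W' (Icc 0 t) := by
      apply ContinuousOn.fun_smul
      · exact ((Real.continuous_exp.comp (by continuity)).neg).continuousOn
      · exact hgc.mono (Icc_subset_Icc le_rfl htδ)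
    have hWd : ∀ s ∈ Ioo (0:ℝ) t, HasDerivWithinAt W (W' s) (Ioi s) s := by
      intro s hs
      have hsδ : s ≤ δ := hs.2.le.trans htδ
      have hVd : HasDerivWithinAt V (-(3/δ) • V s - g s) (Ioi s) s := by
        have h := hV' s hs.1.le
        rw [max_eq_left hsδ] at h
        exact h.mono (fun u hu => (hs.1.trans hu).le)
      have hexp : HasDerivAt (fun s : ℝ => Real.exp (3*s/δ)) (Real.exp (3*s/δ) * (3/δ)) s := by
        have h1 : HasDerivAt (fun s : ℝ => 3*s/δ) (3/δ) s := by
          simpa using ((hasDerivAt_id s).const_mul (3:ℝ)).div_const δ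
        exact h1.exp
      have hcomb := (hexp.hasDerivWithinAt (s := Ioi s)).fun_smul hVd
      refine hcomb.congr_deriv ?_
      show _ = (-Real.exp (3*s/δ)) • g s
      simp only [hW'def, smul_sub, smul_smul]
      module
    have hint : IntervalIntegrable W' MeasureTheory.volume 0 t :=
      hW'c.intervalIntegrable_of_Icc ht0
    have hFTC := intervalIntegral.integral_eq_sub_of_hasDeriv_right_of_le ht0 hWc hWd hint
    have hW0 : W 0 = 0 := by simp [hWdef, hV0]
    have hWt : W t = ∫ s in (0:ℝ)..t, W' s := by rw [hFTC, hW0, sub_zero]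
    have hgn : ContinuousOn (fun s => ‖g s‖) (Icc 0 t) :=
      (hgc.mono (Icc_subset_Icc le_rfl htδ)).norm
    have h1 : ‖W t‖ ≤ ∫ s in (0:ℝ)..t, Real.exp (3*s/δ) * ‖g s‖ := by
      rw [hWt]
      calc ‖∫ s in (0:ℝ)..t, W' s‖ ≤ ∫ s in (0:ℝ)..t, ‖W' s‖ :=
            intervalIntegral.norm_integral_le_integral_norm ht0
        _ = ∫ s in (0:ℝ)..t, Real.exp (3*s/δ) * ‖g s‖ := by
            apply intervalIntegral.integral_congr
            intro s hs
            simp [hW'def, norm_smul, abs_neg, Real.abs_exp]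
    have h2 : (∫ s in (0:ℝ)..t, Real.exp (3*s/δ) * ‖g s‖)
        ≤ ∫ s in (0:ℝ)..t, Real.exp (3*t/δ) * ‖g s‖ := by
      apply intervalIntegral.integral_mono_on ht0
      · exact ((Real.continuous_exp.comp (by continuity)).continuousOn.mul hgn).intervalIntegrable_of_Icc ht0
      · exact (continuousOn_const.mul hgn).intervalIntegrable_of_Icc ht0
      · intro s hs
        apply mul_le_mul_of_nonneg_right _ (norm_nonneg _)
        apply Real.exp_le_exp.2
        gcongr
        exact hs.2
    have h3 : (∫ s in (0:ℝ)..t, Real.exp (3*t/δ) * ‖g s‖)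
        = Real.exp (3*t/δ) * ∫ s in (0:ℝ)..t, ‖g s‖ :=
      intervalIntegral.integral_const_mul _ _
    have hWnorm : ‖W t‖ = Real.exp (3*t/δ) * ‖V t‖ := by
      simp [hWdef, norm_smul, Real.abs_exp]
    have hfin := h1.trans h2
    rw [hWnorm, h3] at hfin
    exact le_of_mul_le_mul_left hfin (Real.exp_pos _)
  -- Key integral bound on the position
  have hXle : ∀ t ∈ Icc (0:ℝ) δ, ‖X t - x0‖ ≤ ∫ s in (0:ℝ)..t, ‖V s‖ := by
    intro t ht
    have hFTC := intervalIntegral.integral_eq_sub_of_hasDeriv_right_of_le ht.1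
      (hXc.mono (Icc_subset_Icc le_rfl ht.2))
      (fun s hs => (hX' s hs.1.le).mono (fun u hu => (hs.1.trans hu).le))
      ((hVc.mono (Icc_subset_Icc le_rfl ht.2)).intervalIntegrable_of_Icc ht.1)
    rw [hX0] at hFTC
    calc ‖X t - x0‖ = ‖∫ s in (0:ℝ)..t, V s‖ := by rw [hFTC]
      _ ≤ ∫ s in (0:ℝ)..t, ‖V s‖ := intervalIntegral.norm_integral_le_integral_norm ht.1
  -- the supremum set
  set S := (fun u => ‖V u‖ / u) '' Ioc (0:ℝ) δ with hSdef
  have hSne : S.Nonempty := ⟨_, ⟨δ, ⟨hδ0, le_rfl⟩, rfl⟩⟩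
  obtain ⟨K, hK⟩ := isCompact_Icc.exists_bound_of_continuousOn hgc
  have hbdd : BddAbove S := by
    refine ⟨K, ?_⟩
    rintro _ ⟨u, hu, rfl⟩
    have h1 : ‖V u‖ ≤ ∫ s in (0:ℝ)..u, ‖g s‖ := hVle u ⟨hu.1.le, hu.2⟩
    have h2 : (∫ s in (0:ℝ)..u, ‖g s‖) ≤ ∫ s in (0:ℝ)..u, K := by
      apply intervalIntegral.integral_mono_on hu.1.le
        ((hgc.mono (Icc_subset_Icc le_rfl hu.2)).norm.intervalIntegrable_of_Icc hu.1.le)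
        intervalIntegrable_const
      intro s hs; exact hK s ⟨hs.1, hs.2.trans hu.2⟩
    have h3 : (∫ s in (0:ℝ)..u, (K:ℝ)) = K * u := by simp [mul_comm]
    simp only
    rw [div_le_iff₀ hu.1]
    calc ‖V u‖ ≤ K * u := h1.trans (h2.trans_eq h3)
      _ = K * u := rfl
  set M := sSup S with hMdef
  have hMδ : ‖V δ‖ / δ ≤ M := le_csSup hbdd ⟨δ, ⟨hδ0, le_rfl⟩, rfl⟩
  have hM0 : 0 ≤ M := le_trans (by positivity) hMδ
  have hVM : ∀ u ∈ Icc (0:ℝ) δ, ‖V u‖ ≤ M * u := by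
    intro u hu
    rcases eq_or_lt_of_le hu.1 with h | h
    · simp [← h, hV0]
    · have hle : ‖V u‖ / u ≤ M := le_csSup hbdd ⟨u, ⟨h, hu.2⟩, rfl⟩
      calc ‖V u‖ = ‖V u‖ / u * u := by field_simp
        _ ≤ M * u := mul_le_mul_of_nonneg_right hle h.le
  have hgle : ∀ s ∈ Icc (0:ℝ) δ, ‖g s‖ ≤ G + L * (M * s^2 / 2) := by
    intro s hs
    have h1 : ‖g s - gradient f x0‖ ≤ L * ‖X s - x0‖ := hf.2.2 (X s) x0
    have h2 : ‖X s - x0‖ ≤ ∫ u in (0:ℝ)..s, ‖V u‖ := hXle s hs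
    have h3 : (∫ u in (0:ℝ)..s, ‖V u‖) ≤ ∫ u in (0:ℝ)..s, M * u := by
      apply intervalIntegral.integral_mono_on hs.1
        ((hVc.mono (Icc_subset_Icc le_rfl hs.2)).norm.intervalIntegrable_of_Icc hs.1)
        ((continuous_const.mul continuous_id).intervalIntegrable _ _)
      intro u hu; exact hVM u ⟨hu.1, hu.2.trans hs.2⟩
    have h4 : (∫ u in (0:ℝ)..s, M * u) = M * s^2 / 2 := by
      rw [intervalIntegral.integral_const_mul, integral_id]
      ring
    have h5 : ‖g s‖ ≤ ‖g s - gradient f x0‖ + G :=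
      sub_le_iff_le_add.mp (norm_sub_norm_le _ _)
    have h6 : L * ‖X s - x0‖ ≤ L * (M * s^2 / 2) :=
      mul_le_mul_of_nonneg_left (h2.trans (h3.trans_eq h4)) hL.le
    linarith
  have hkey : ∀ t ∈ Ioc (0:ℝ) δ, ‖V t‖ / t ≤ G + L * δ^2 / 6 * M := by
    intro t ht
    have h1 := hVle t ⟨ht.1.le, ht.2⟩
    have h2 : (∫ s in (0:ℝ)..t, ‖g s‖) ≤ ∫ s in (0:ℝ)..t, (G + L * (M * s^2 / 2)) := by
      apply intervalIntegral.integral_mono_on ht.1.le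
        ((hgc.mono (Icc_subset_Icc le_rfl ht.2)).norm.intervalIntegrable_of_Icc ht.1.le)
        ((by fun_prop : Continuous fun s : ℝ => G + L * (M * s^2 / 2)).intervalIntegrable _ _)
      intro s hs; exact hgle s ⟨hs.1, hs.2.trans ht.2⟩
    have h3 : (∫ s in (0:ℝ)..t, (G + L * (M * s^2 / 2))) = G * t + L * M * t^3 / 6 := by
      have hrw : (fun s : ℝ => G + L * (M * s^2 / 2)) = fun s : ℝ => G + (L * M / 2) * s^2 := by
        funext s; ring
      rw [hrw, intervalIntegral.integral_add intervalIntegrable_const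
        ((intervalIntegral.intervalIntegrable_pow 2).const_mul _),
        intervalIntegral.integral_const_mul, integral_pow]
      simp
      ring
    have h4 : ‖V t‖ ≤ G * t + L * M * t^3 / 6 := h1.trans (h2.trans_eq h3)
    rw [div_le_iff₀ ht.1]
    have htδ2 : t^2 ≤ δ^2 := by nlinarith [ht.1, ht.2]
    nlinarith [mul_le_mul_of_nonneg_left htδ2 (mul_nonneg (mul_nonneg hL.le hM0) ht.1.le)]
  have hMle : M ≤ G + L * δ^2 / 6 * M := by
    apply csSup_le hSne
    rintro _ ⟨t, ht, rfl⟩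
    exact hkey t ht
  have hδ2 : δ^2 < 6 / L := by
    have hs := Real.sq_sqrt (by positivity : (0:ℝ) ≤ 6 / L)
    nlinarith [Real.sqrt_nonneg (6 / L)]
  have hc : L * δ^2 / 6 < 1 := by
    rw [div_lt_one (by norm_num : (0:ℝ) < 6)]
    calc L * δ^2 < L * (6 / L) := by
          exact mul_lt_mul_of_pos_left hδ2 hL
      _ = 6 := by field_simp
  have h1c : 0 < 1 - L * δ^2 / 6 := by linarith
  rw [le_div_iff₀ h1c]
  nlinarith [hMle]
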